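/- The proposition ¬¬((¬¬∀x ¬¬(P(x) ∧ Q)) ⇒ (¬¬∀x P(x))) has no constructive proof, where P is a unary predicate and Q a propositional atom. -/

import Mathlib

/-- Terms: de Bruijn variables and a binary function symbol (union). -/
inductive Tm : Type where
  | var : Nat → Tm
  | cup : Tm → Tm → Tm
deriving DecidableEq

def Tm.rename (f : Nat → Nat) : Tm → Tm
  | .var n => .var (f n)
  | .cup s t => .cup (s.rename f) (t.rename f)

def Tm.subst (σ : Nat → Tm) : Tm → Tm
  | .var n => σ n
  | .cup s t => .cup (s.subst σ) (t.subst σ)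

/-- First-order formulas over Nat-indexed predicate symbols, de Bruijn binders. -/
inductive Fm : Type where
  | atom : Nat → List Tm → Fm
  | top : Fm
  | bot : Fm
  | neg : Fm → Fm
  | and : Fm → Fm → Fm
  | or : Fm → Fm → Fm
  | imp : Fm → Fm → Fm
  | all : Fm → Fm
  | ex : Fm → Fm
deriving DecidableEq

def liftR (f : Nat → Nat) : Nat → Nat
  | 0 => 0
  | n + 1 => f n + 1

def liftS (σ : Nat → Tm) : Nat → Tm
  | 0 => .var 0
  | n + 1 => (σ n).rename Nat.succ

def Fm.rename (f : Nat → Nat) : Fm → Fm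
  | .atom p l => .atom p (l.map (Tm.rename f))
  | .top => .top
  | .bot => .bot
  | .neg A => .neg (A.rename f)
  | .and A B => .and (A.rename f) (B.rename f)
  | .or A B => .or (A.rename f) (B.rename f)
  | .imp A B => .imp (A.rename f) (B.rename f)
  | .all A => .all (A.rename (liftR f))
  | .ex A => .ex (A.rename (liftR f))

def Fm.subst (σ : Nat → Tm) : Fm → Fm
  | .atom p l => .atom p (l.map (Tm.subst σ))
  | .top => .top
  | .bot => .bot
  | .neg A => .neg (A.subst σ)
  | .and A B => .and (A.subst σ) (B.subst σ)
  | .or A B => .or (A.subst σ) (B.subst σ)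
  | .imp A B => .imp (A.subst σ) (B.subst σ)
  | .all A => .all (A.subst (liftS σ))
  | .ex A => .ex (A.subst (liftS σ))

/-- Shift all free variables up by one. -/
def Fm.shift (A : Fm) : Fm := A.rename Nat.succ

/-- Instantiate the outermost bound variable with term `t` : `(t/x)A`. -/
def Fm.inst (t : Tm) (A : Fm) : Fm :=
  A.subst (fun n => match n with | 0 => t | n + 1 => .var n)

/-- Double negation. -/
def Fm.dn (A : Fm) : Fm := .neg (.neg A)

/-- Cut-free classical multi-conclusion sequent calculus (Figure 1). -/
inductive Cl : List Fm → List Fm → Prop where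
  | ax (A : Fm) : Cl [A] [A]
  | perm {Γ Γ' Δ Δ'} : Γ.Perm Γ' → Δ.Perm Δ' → Cl Γ Δ → Cl Γ' Δ'
  | contrL {Γ Δ A} : Cl (A :: A :: Γ) Δ → Cl (A :: Γ) Δ
  | contrR {Γ Δ A} : Cl Γ (A :: A :: Δ) → Cl Γ (A :: Δ)
  | weakL {Γ Δ A} : Cl Γ Δ → Cl (A :: Γ) Δ
  | weakR {Γ Δ A} : Cl Γ Δ → Cl Γ (A :: Δ)
  | topR {Γ Δ} : Cl Γ (.top :: Δ)
  | botL {Γ Δ} : Cl (.bot :: Γ) Δ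
  | negL {Γ Δ A} : Cl Γ (A :: Δ) → Cl (.neg A :: Γ) Δ
  | negR {Γ Δ A} : Cl (A :: Γ) Δ → Cl Γ (.neg A :: Δ)
  | andL {Γ Δ A B} : Cl (A :: B :: Γ) Δ → Cl (.and A B :: Γ) Δ
  | andR {Γ Δ A B} : Cl Γ (A :: Δ) → Cl Γ (B :: Δ) → Cl Γ (.and A B :: Δ)
  | orL {Γ Δ A B} : Cl (A :: Γ) Δ → Cl (B :: Γ) Δ → Cl (.or A B :: Γ) Δ
  | orR1 {Γ Δ A B} : Cl Γ (A :: Δ) → Cl Γ (.or A B :: Δ)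
  | orR2 {Γ Δ A B} : Cl Γ (B :: Δ) → Cl Γ (.or A B :: Δ)
  | impL {Γ Δ A B} : Cl Γ (A :: Δ) → Cl (B :: Γ) Δ → Cl (.imp A B :: Γ) Δ
  | impR {Γ Δ A B} : Cl (A :: Γ) (B :: Δ) → Cl Γ (.imp A B :: Δ)
  | allL {Γ Δ A} (t : Tm) : Cl (A.inst t :: Γ) Δ → Cl (.all A :: Γ) Δ
  | allR {Γ Δ A} : Cl (Γ.map Fm.shift) (A :: Δ.map Fm.shift) → Cl Γ (.all A :: Δ)
  | exL {Γ Δ A} : Cl (A :: Γ.map Fm.shift) (Δ.map Fm.shift) → Cl (.ex A :: Γ) Δ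
  | exR {Γ Δ A} (t : Tm) : Cl Γ (A.inst t :: Δ) → Cl Γ (.ex A :: Δ)

/-- Constructive (intuitionistic) single-conclusion sequent calculus:
the restriction of the classical calculus to sequents with at most one
conclusion, with the adapted ⇒-left rule. -/
inductive Intu : List Fm → Option Fm → Prop where
  | ax (A : Fm) : Intu [A] (some A)
  | perm {Γ Γ' Δ} : Γ.Perm Γ' → Intu Γ Δ → Intu Γ' Δ
  | contrL {Γ Δ A} : Intu (A :: A :: Γ) Δ → Intu (A :: Γ) Δ
  | weakL {Γ Δ A} : Intu Γ Δ → Intu (A :: Γ) Δ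
  | weakR {Γ A} : Intu Γ none → Intu Γ (some A)
  | topR {Γ} : Intu Γ (some .top)
  | botL {Γ Δ} : Intu (.bot :: Γ) Δ
  | negL {Γ A} : Intu Γ (some A) → Intu (.neg A :: Γ) none
  | negR {Γ A} : Intu (A :: Γ) none → Intu Γ (some (.neg A))
  | andL {Γ Δ A B} : Intu (A :: B :: Γ) Δ → Intu (.and A B :: Γ) Δ
  | andR {Γ A B} : Intu Γ (some A) → Intu Γ (some B) → Intu Γ (some (.and A B))
  | orL {Γ Δ A B} : Intu (A :: Γ) Δ → Intu (B :: Γ) Δ → Intu (.or A B :: Γ) Δ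
  | orR1 {Γ A B} : Intu Γ (some A) → Intu Γ (some (.or A B))
  | orR2 {Γ A B} : Intu Γ (some B) → Intu Γ (some (.or A B))
  | impL {Γ Δ A B} : Intu Γ (some A) → Intu (B :: Γ) Δ → Intu (.imp A B :: Γ) Δ
  | impR {Γ A B} : Intu (A :: Γ) (some B) → Intu Γ (some (.imp A B))
  | allL {Γ Δ A} (t : Tm) : Intu (A.inst t :: Γ) Δ → Intu (.all A :: Γ) Δ
  | allR {Γ A} : Intu (Γ.map Fm.shift) (some A) → Intu Γ (some (.all A))
  | exL {Γ Δ A} : Intu (A :: Γ.map Fm.shift) (Δ.map Fm.shift) → Intu (.ex A :: Γ) Δ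
  | exR {Γ A} (t : Tm) : Intu Γ (some (A.inst t)) → Intu Γ (some (.ex A))

/-- Dowek's translation ‖·‖: double negations both before and after each
connective and quantifier, atoms unchanged. -/
def Fm.bar : Fm → Fm
  | .atom p l => .atom p l
  | .top => Fm.dn .top
  | .bot => Fm.dn .bot
  | .neg A => Fm.dn (Fm.dn (.neg A.bar))
  | .and A B => Fm.dn (.and (Fm.dn A.bar) (Fm.dn B.bar))
  | .or A B => Fm.dn (.or (Fm.dn A.bar) (Fm.dn B.bar))
  | .imp A B => Fm.dn (.imp (Fm.dn A.bar) (Fm.dn B.bar))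
  | .all A => Fm.dn (.all (Fm.dn A.bar))
  | .ex A => Fm.dn (.ex (Fm.dn A.bar))

/-- The light translation |·|: like ‖·‖ but the outermost double negation
is removed. -/
def Fm.light : Fm → Fm
  | .atom p l => .atom p l
  | .top => .top
  | .bot => .bot
  | .neg A => .neg (Fm.dn A.bar)
  | .and A B => .and (Fm.dn A.bar) (Fm.dn B.bar)
  | .or A B => .or (Fm.dn A.bar) (Fm.dn B.bar)
  | .imp A B => .imp (Fm.dn A.bar) (Fm.dn B.bar)
  | .all A => .all (Fm.dn A.bar)
  | .ex A => .ex (Fm.dn A.bar)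

/-- A formula is atomic if it is of the form `atom p l`. -/
def Fm.isAtom : Fm → Prop
  | .atom _ _ => True
  | _ => False


/-! ### Kripke semantics (worlds ℕ, constant domain ℕ) and soundness -/

def Kev (ρ : Nat → Nat) : Tm → Nat
  | .var n => ρ n
  | .cup s t => max (Kev ρ s) (Kev ρ t)

def Kcons (d : Nat) (ρ : Nat → Nat) : Nat → Nat
  | 0 => d
  | n + 1 => ρ n

def KI (p : Nat) (w : Nat) (l : List Nat) : Prop :=
  match p with
  | 0 => l.headD 0 < w
  | _ => True

def Kforce (w : Nat) (ρ : Nat → Nat) : Fm → Prop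
  | .atom p l => KI p w (l.map (Kev ρ))
  | .top => True
  | .bot => False
  | .neg A => ∀ v, w ≤ v → ¬ Kforce v ρ A
  | .and A B => Kforce w ρ A ∧ Kforce w ρ B
  | .or A B => Kforce w ρ A ∨ Kforce w ρ B
  | .imp A B => ∀ v, w ≤ v → Kforce v ρ A → Kforce v ρ B
  | .all A => ∀ d, Kforce w (Kcons d ρ) A
  | .ex A => ∃ d, Kforce w (Kcons d ρ) A

theorem Kev_ext {ρ ρ' : Nat → Nat} (h : ∀ n, ρ n = ρ' n) (t : Tm) :
    Kev ρ t = Kev ρ' t := by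
  induction t with
  | var n => exact h n
  | cup s t ihs iht => simp [Kev, ihs, iht]

theorem Kev_rename (ρ : Nat → Nat) (f : Nat → Nat) (t : Tm) :
    Kev ρ (t.rename f) = Kev (fun n => ρ (f n)) t := by
  induction t with
  | var n => rfl
  | cup s t ihs iht => simp [Tm.rename, Kev, ihs, iht]

theorem Kev_subst (ρ : Nat → Nat) (σ : Nat → Tm) (t : Tm) :
    Kev ρ (t.subst σ) = Kev (fun n => Kev ρ (σ n)) t := by
  induction t with
  | var n => rfl
  | cup s t ihs iht => simp [Tm.subst, Kev, ihs, iht]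

theorem Kcons_ext {ρ ρ' : Nat → Nat} (h : ∀ n, ρ n = ρ' n) (d : Nat) :
    ∀ n, Kcons d ρ n = Kcons d ρ' n := by
  intro n; cases n <;> simp [Kcons, h]

theorem Kforce_ext {ρ ρ' : Nat → Nat} (h : ∀ n, ρ n = ρ' n) (A : Fm) (w : Nat) :
    Kforce w ρ A ↔ Kforce w ρ' A := by
  induction A generalizing ρ ρ' w with
  | atom p l =>
      simp only [Kforce]
      have : l.map (Kev ρ) = l.map (Kev ρ') := by
        apply List.map_congr_left; intro t _; exact Kev_ext h t
      rw [this]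
  | top => exact Iff.rfl
  | bot => exact Iff.rfl
  | neg A ih => simp only [Kforce]; exact forall_congr' fun v => imp_congr Iff.rfl (not_congr (ih h v))
  | and A B ihA ihB => simp only [Kforce]; exact and_congr (ihA h w) (ihB h w)
  | or A B ihA ihB => simp only [Kforce]; exact or_congr (ihA h w) (ihB h w)
  | imp A B ihA ihB =>
      simp only [Kforce]
      exact forall_congr' fun v => imp_congr Iff.rfl (imp_congr (ihA h v) (ihB h v))
  | all A ih => simp only [Kforce]; exact forall_congr' fun d => ih (Kcons_ext h d) w
  | ex A ih => simp only [Kforce]; exact exists_congr fun d => ih (Kcons_ext h d) w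

theorem Kforce_rename (f : Nat → Nat) (A : Fm) :
    ∀ w ρ, Kforce w ρ (A.rename f) ↔ Kforce w (fun n => ρ (f n)) A := by
  induction A generalizing f with
  | atom p l =>
      intro w ρ
      simp only [Fm.rename, Kforce, List.map_map]
      have : l.map (Kev ρ ∘ Tm.rename f) = l.map (Kev fun n => ρ (f n)) := by
        apply List.map_congr_left; intro t _; exact Kev_rename ρ f t
      rw [this]
  | top => intro w ρ; exact Iff.rfl
  | bot => intro w ρ; exact Iff.rfl
  | neg A ih =>
      intro w ρ
      simp only [Fm.rename, Kforce]
      exact forall_congr' fun v => imp_congr Iff.rfl (not_congr (ih f v ρ))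
  | and A B ihA ihB =>
      intro w ρ; simp only [Fm.rename, Kforce]
      exact and_congr (ihA f w ρ) (ihB f w ρ)
  | or A B ihA ihB =>
      intro w ρ; simp only [Fm.rename, Kforce]
      exact or_congr (ihA f w ρ) (ihB f w ρ)
  | imp A B ihA ihB =>
      intro w ρ; simp only [Fm.rename, Kforce]
      exact forall_congr' fun v => imp_congr Iff.rfl (imp_congr (ihA f v ρ) (ihB f v ρ))
  | all A ih =>
      intro w ρ
      simp only [Fm.rename, Kforce]
      refine forall_congr' fun d => ?_
      rw [ih (liftR f) w (Kcons d ρ)]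
      apply Kforce_ext
      intro n; cases n <;> rfl
  | ex A ih =>
      intro w ρ
      simp only [Fm.rename, Kforce]
      refine exists_congr fun d => ?_
      rw [ih (liftR f) w (Kcons d ρ)]
      apply Kforce_ext
      intro n; cases n <;> rfl

theorem Kforce_subst (σ : Nat → Tm) (A : Fm) :
    ∀ w ρ, Kforce w ρ (A.subst σ) ↔ Kforce w (fun n => Kev ρ (σ n)) A := by
  induction A generalizing σ with
  | atom p l =>
      intro w ρ
      simp only [Fm.subst, Kforce, List.map_map]
      have : l.map (Kev ρ ∘ Tm.subst σ) = l.map (Kev fun n => Kev ρ (σ n)) := by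
        apply List.map_congr_left; intro t _; exact Kev_subst ρ σ t
      rw [this]
  | top => intro w ρ; exact Iff.rfl
  | bot => intro w ρ; exact Iff.rfl
  | neg A ih =>
      intro w ρ
      simp only [Fm.subst, Kforce]
      exact forall_congr' fun v => imp_congr Iff.rfl (not_congr (ih σ v ρ))
  | and A B ihA ihB =>
      intro w ρ; simp only [Fm.subst, Kforce]
      exact and_congr (ihA σ w ρ) (ihB σ w ρ)
  | or A B ihA ihB =>
      intro w ρ; simp only [Fm.subst, Kforce]
      exact or_congr (ihA σ w ρ) (ihB σ w ρ)
  | imp A B ihA ihB =>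
      intro w ρ; simp only [Fm.subst, Kforce]
      exact forall_congr' fun v => imp_congr Iff.rfl (imp_congr (ihA σ v ρ) (ihB σ v ρ))
  | all A ih =>
      intro w ρ
      simp only [Fm.subst, Kforce]
      refine forall_congr' fun d => ?_
      rw [ih (liftS σ) w (Kcons d ρ)]
      apply Kforce_ext
      intro n
      cases n with
      | zero => rfl
      | succ n =>
          show Kev (Kcons d ρ) ((σ n).rename Nat.succ) = Kev ρ (σ n)
          rw [Kev_rename]; exact Kev_ext (fun _ => rfl) _
  | ex A ih =>
      intro w ρ
      simp only [Fm.subst, Kforce]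
      refine exists_congr fun d => ?_
      rw [ih (liftS σ) w (Kcons d ρ)]
      apply Kforce_ext
      intro n
      cases n with
      | zero => rfl
      | succ n =>
          show Kev (Kcons d ρ) ((σ n).rename Nat.succ) = Kev ρ (σ n)
          rw [Kev_rename]; exact Kev_ext (fun _ => rfl) _

theorem Kforce_inst (t : Tm) (A : Fm) (w : Nat) (ρ : Nat → Nat) :
    Kforce w ρ (A.inst t) ↔ Kforce w (Kcons (Kev ρ t) ρ) A := by
  rw [Fm.inst, Kforce_subst]
  apply Kforce_ext
  intro n; cases n <;> rfl

theorem Kforce_shift (A : Fm) (w : Nat) (d : Nat) (ρ : Nat → Nat) :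
    Kforce w (Kcons d ρ) A.shift ↔ Kforce w ρ A := by
  rw [Fm.shift, Kforce_rename]
  exact Kforce_ext (fun _ => rfl) A w

theorem Kforce_mono {w v : Nat} (hwv : w ≤ v) (A : Fm) :
    ∀ ρ, Kforce w ρ A → Kforce v ρ A := by
  induction A generalizing w v with
  | atom p l =>
      intro ρ h
      cases p with
      | zero => exact lt_of_lt_of_le h hwv
      | succ p => trivial
  | top => intro ρ h; trivial
  | bot => intro ρ h; exact h
  | neg A ih => intro ρ h u hu; exact h u (le_trans hwv hu)
  | and A B ihA ihB => intro ρ h; exact ⟨ihA hwv ρ h.1, ihB hwv ρ h.2⟩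
  | or A B ihA ihB =>
      intro ρ h
      cases h with
      | inl h => exact Or.inl (ihA hwv ρ h)
      | inr h => exact Or.inr (ihB hwv ρ h)
  | imp A B ihA ihB => intro ρ h u hu; exact h u (le_trans hwv hu)
  | all A ih => intro ρ h d; exact ih hwv _ (h d)
  | ex A ih => intro ρ h; obtain ⟨d, hd⟩ := h; exact ⟨d, ih hwv _ hd⟩

def KforceO (w : Nat) (ρ : Nat → Nat) : Option Fm → Prop
  | none => False
  | some A => Kforce w ρ A

theorem Intu_sound {Γ : List Fm} {Δ : Option Fm} (h : Intu Γ Δ) :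
    ∀ w ρ, (∀ A ∈ Γ, Kforce w ρ A) → KforceO w ρ Δ := by
  induction h with
  | ax A => intro w ρ h; exact h A (List.mem_singleton.mpr rfl)
  | perm hp _ ih => intro w ρ h; exact ih w ρ fun A hA => h A (hp.mem_iff.mp hA)
  | contrL _ ih =>
      intro w ρ h
      apply ih w ρ
      intro B hB
      rcases List.mem_cons.mp hB with rfl | hB
      · exact h _ List.mem_cons_self
      · exact h B hB
  | weakL _ ih => intro w ρ h; exact ih w ρ fun B hB => h B (List.mem_cons_of_mem _ hB)
  | weakR _ ih => intro w ρ h; exact absurd (ih w ρ h) (by exact id)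
  | topR => intro w ρ h; trivial
  | botL => intro w ρ h; exact absurd (h _ List.mem_cons_self) (by exact id)
  | @negL Γ A _ ih =>
      intro w ρ h
      have hn : Kforce w ρ (.neg A) := h _ List.mem_cons_self
      exact hn w le_rfl (ih w ρ fun B hB => h B (List.mem_cons_of_mem _ hB))
  | @negR Γ A _ ih =>
      intro w ρ h v hv hA
      exact ih v ρ fun B hB => by
        rcases List.mem_cons.mp hB with rfl | hB
        · exact hA
        · exact Kforce_mono hv B ρ (h B hB)
  | @andL Γ Δ A B _ ih =>
      intro w ρ h
      have hab : Kforce w ρ (.and A B) := h _ List.mem_cons_self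
      apply ih w ρ
      intro C hC
      rcases List.mem_cons.mp hC with rfl | hC
      · exact hab.1
      rcases List.mem_cons.mp hC with rfl | hC
      · exact hab.2
      · exact h C (List.mem_cons_of_mem _ hC)
  | andR _ _ ih1 ih2 => intro w ρ h; exact ⟨ih1 w ρ h, ih2 w ρ h⟩
  | @orL Γ Δ A B _ _ ih1 ih2 =>
      intro w ρ h
      have hab : Kforce w ρ (.or A B) := h _ List.mem_cons_self
      cases hab with
      | inl hA =>
          apply ih1 w ρ; intro C hC
          rcases List.mem_cons.mp hC with rfl | hC
          · exact hA
          · exact h C (List.mem_cons_of_mem _ hC)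
      | inr hB =>
          apply ih2 w ρ; intro C hC
          rcases List.mem_cons.mp hC with rfl | hC
          · exact hB
          · exact h C (List.mem_cons_of_mem _ hC)
  | orR1 _ ih => intro w ρ h; exact Or.inl (ih w ρ h)
  | orR2 _ ih => intro w ρ h; exact Or.inr (ih w ρ h)
  | @impL Γ Δ A B _ _ ih1 ih2 =>
      intro w ρ h
      have hab : Kforce w ρ (.imp A B) := h _ List.mem_cons_self
      have hA : Kforce w ρ A := ih1 w ρ fun C hC => h C (List.mem_cons_of_mem _ hC)
      have hB : Kforce w ρ B := hab w le_rfl hA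
      apply ih2 w ρ
      intro C hC
      rcases List.mem_cons.mp hC with rfl | hC
      · exact hB
      · exact h C (List.mem_cons_of_mem _ hC)
  | @impR Γ A B _ ih =>
      intro w ρ h v hv hA
      exact ih v ρ fun C hC => by
        rcases List.mem_cons.mp hC with rfl | hC
        · exact hA
        · exact Kforce_mono hv C ρ (h C hC)
  | @allL Γ Δ A t _ ih =>
      intro w ρ h
      have ha : Kforce w ρ (.all A) := h _ List.mem_cons_self
      apply ih w ρ
      intro C hC
      rcases List.mem_cons.mp hC with rfl | hC
      · exact (Kforce_inst t A w ρ).mpr (ha (Kev ρ t))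
      · exact h C (List.mem_cons_of_mem _ hC)
  | @allR Γ A _ ih =>
      intro w ρ h d
      exact ih w (Kcons d ρ) fun C hC => by
        obtain ⟨B, hB, rfl⟩ := List.mem_map.mp hC
        exact (Kforce_shift B w d ρ).mpr (h B hB)
  | @exL Γ Δ A _ ih =>
      intro w ρ h
      have ha : Kforce w ρ (.ex A) := h _ List.mem_cons_self
      obtain ⟨d, hd⟩ := ha
      have := ih w (Kcons d ρ) fun C hC => by
        rcases List.mem_cons.mp hC with rfl | hC
        · exact hd
        · obtain ⟨B, hB, rfl⟩ := List.mem_map.mp hC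
          exact (Kforce_shift B w d ρ).mpr (h B (List.mem_cons_of_mem _ hB))
      cases Δ with
      | none => exact this
      | some B => exact (Kforce_shift B w d ρ).mp this
  | exR t _ ih =>
      intro w ρ h
      exact ⟨Kev ρ t, (Kforce_inst t _ w ρ).mp (ih w ρ h)⟩

theorem no_all_P (w : Nat) (ρ : Nat → Nat) :
    ¬ Kforce w ρ (.all (.atom 0 [.var 0])) := by
  intro h
  have := h w
  simp only [Kforce, KI, List.map, Kev, Kcons, List.headD] at this
  exact lt_irrefl w this

theorem no_Y (w : Nat) (ρ : Nat → Nat) :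
    ¬ Kforce w ρ (Fm.dn (.all (.atom 0 [.var 0]))) := by
  intro h
  exact h w le_rfl fun v _ => no_all_P v ρ

theorem yes_allpq (w : Nat) (ρ : Nat → Nat) :
    Kforce w ρ (.all (Fm.dn (.and (.atom 0 [.var 0]) (.atom 1 [])))) := by
  intro d v _ hv
  apply hv (max v (d + 1)) (le_max_left _ _)
  constructor
  · show KI 0 (max v (d + 1)) [d]
    show d < max v (d + 1)
    exact lt_of_lt_of_le (Nat.lt_succ_self d) (le_max_right _ _)
  · trivial

theorem yes_X (w : Nat) (ρ : Nat → Nat) :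
    Kforce w ρ (Fm.dn (.all (Fm.dn (.and (.atom 0 [.var 0]) (.atom 1 []))))) := by
  intro v _ hv
  exact hv v le_rfl (yes_allpq v ρ)


theorem stmt10 :
    ¬ Intu [] (some (Fm.dn (.imp
        (Fm.dn (.all (Fm.dn (.and (.atom 0 [.var 0]) (.atom 1 [])))))
        (Fm.dn (.all (.atom 0 [.var 0])))))) := by
  intro h
  have hs := Intu_sound h 0 (fun _ => 0) (fun A hA => absurd hA List.not_mem_nil)
  apply hs 0 le_rfl
  intro u _ himp
  exact no_Y u (fun _ => 0) (himp u le_rfl (yes_X u (fun _ => 0)))
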